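/- Let f(u) = 0 for u ≤ e⁻¹, f(u) = 2/e + u·log(u²) for u > e⁻¹, and F(u) = ∫₀ᵘ f(s) ds. Then f(s)·s ≥ 2·F(s) ≥ 0 for all s ∈ ℝ. -/

import Mathlib

open Real

noncomputable def f (u : ℝ) : ℝ :=
  if u ≤ (Real.exp 1)⁻¹ then 0 else 2 / Real.exp 1 + u * Real.log (u ^ 2)

noncomputable def F (u : ℝ) : ℝ := ∫ s in (0 : ℝ)..u, f s

lemma f_eq' : f = fun u => if u ≤ (exp 1)⁻¹ then 0 else 2 / exp 1 + 2 * (u * log u) := by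
  funext u
  unfold f
  rw [Real.log_pow]
  split_ifs
  · rfl
  · push_cast; ring

lemma f_cont : Continuous f := by
  rw [f_eq']
  apply Continuous.if_le
  · exact continuous_const
  · exact continuous_const.add (continuous_const.mul Real.continuous_mul_log)
  · exact continuous_id
  · exact continuous_const
  · intro x hx
    rw [hx, Real.log_inv, Real.log_exp]
    field_simp
    norm_num

lemma f_nonneg (u : ℝ) : 0 ≤ f u := by
  rw [f_eq']
  dsimp only
  split_ifs with h
  · exact le_rfl
  · push_neg at h
    have hu : 0 < u := lt_trans (inv_pos.mpr (exp_pos 1)) h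
    have hlog : -Real.log u ≤ (Real.exp 1 * u)⁻¹ := by
      have h1 := Real.log_le_sub_one_of_pos (x := (Real.exp 1 * u)⁻¹) (by positivity)
      rw [Real.log_inv, Real.log_mul (Real.exp_ne_zero 1) hu.ne', Real.log_exp] at h1
      linarith
    have h2 : u * (Real.exp 1 * u)⁻¹ = (Real.exp 1)⁻¹ := by
      field_simp
    have h3 := mul_le_mul_of_nonneg_left hlog hu.le
    rw [h2] at h3
    have he : 0 < Real.exp 1 := Real.exp_pos 1
    have h5 : 2 / Real.exp 1 = 2 * (Real.exp 1)⁻¹ := by rw [div_eq_mul_inv]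
    linarith

lemma f_ge (u : ℝ) (hu : (exp 1)⁻¹ ≤ u) : f u = 2 / exp 1 + 2 * (u * log u) := by
  rw [f_eq']
  dsimp only
  split_ifs with h
  · have : u = (exp 1)⁻¹ := le_antisymm h hu
    subst this
    rw [Real.log_inv, Real.log_exp]
    field_simp
    norm_num
  · rfl

lemma F_zero (s : ℝ) (hs : s ≤ (exp 1)⁻¹) : F s = 0 := by
  have e0 : (0:ℝ) ≤ (exp 1)⁻¹ := (inv_pos.mpr (exp_pos 1)).le
  unfold F
  rw [intervalIntegral.integral_congr (g := fun _ => (0:ℝ)), intervalIntegral.integral_zero]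
  intro u hu
  have h2 : u ≤ (exp 1)⁻¹ := by
    rcases Set.mem_uIcc.mp hu with h | h
    · exact h.2.trans hs
    · exact h.2.trans e0
  simp [f, h2]

lemma F_eq (s : ℝ) (hs : (exp 1)⁻¹ < s) :
    F s = 2*s/exp 1 + s^2 * log s - s^2/2 - 1/(2*(exp 1)^2) := by
  have e0 : (0:ℝ) < (exp 1)⁻¹ := inv_pos.mpr (exp_pos 1)
  set a : ℝ := (exp 1)⁻¹ with ha
  have hsplit : (∫ u in (0:ℝ)..a, f u) + (∫ u in a..s, f u) = F s :=
    intervalIntegral.integral_add_adjacent_intervals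
      (f_cont.intervalIntegrable _ _) (f_cont.intervalIntegrable _ _)
  have h1 : (∫ u in (0:ℝ)..a, f u) = 0 := by
    have := F_zero a le_rfl
    unfold F at this
    exact this
  have h2 : (∫ u in a..s, f u)
      = (2*s/exp 1 + s^2 * log s - s^2/2) - (2*a/exp 1 + a^2 * log a - a^2/2) := by
    apply intervalIntegral.integral_eq_sub_of_hasDerivAt
    · intro u hu
      rw [Set.uIcc_of_le hs.le] at hu
      have hu0 : 0 < u := lt_of_lt_of_le e0 hu.1
      rw [f_ge u hu.1]
      have d1 : HasDerivAt (fun x : ℝ => 2*x/exp 1) (2/exp 1) u := by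
        have := ((hasDerivAt_id u).const_mul (2:ℝ)).div_const (exp 1)
        exact this.congr_deriv (by ring)
      have d2 : HasDerivAt (fun x : ℝ => x^2 * log x) (2*u*log u + u) u := by
        have := (hasDerivAt_pow 2 u).mul (Real.hasDerivAt_log hu0.ne')
        exact this.congr_deriv (by field_simp; ring)
      have d3 : HasDerivAt (fun x : ℝ => x^2/2) u u := by
        have := (hasDerivAt_pow 2 u).div_const 2
        exact this.congr_deriv (by push_cast; ring)
      have d := (d1.add d2).sub d3
      exact d.congr_deriv (by ring)
    · exact (f_cont.intervalIntegrable _ _)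
  have hlog : Real.log a = -1 := by rw [ha, Real.log_inv, Real.log_exp]
  have haval : 2*a/exp 1 + a^2 * log a - a^2/2 = 1/(2*(exp 1)^2) := by
    rw [hlog, ha]
    have he : (0:ℝ) < Real.exp 1 := Real.exp_pos 1
    generalize Real.exp 1 = E at he ⊢
    field_simp
    ring
  rw [← hsplit, h1, h2, haval]
  ring

theorem f_F_inequality : ∀ s : ℝ, 2 * F s ≤ f s * s ∧ 0 ≤ F s := by
  intro s
  by_cases hs : s ≤ (exp 1)⁻¹
  · have hF : F s = 0 := F_zero s hs
    have hf : f s = 0 := by simp [f, hs]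
    rw [hF, hf]
    norm_num
  · push_neg at hs
    have e0 : (0:ℝ) < (exp 1)⁻¹ := inv_pos.mpr (exp_pos 1)
    have hs0 : (0:ℝ) ≤ s := (e0.trans hs).le
    constructor
    · rw [F_eq s hs, f_ge s hs.le]
      have he : (0:ℝ) < Real.exp 1 := Real.exp_pos 1
      generalize Real.exp 1 = E at he ⊢
      generalize Real.log s = L
      have key : (2/E + 2*(s*L))*s - 2*(2*s/E + s^2*L - s^2/2 - 1/(2*E^2))
          = (s - 1/E)^2 := by
        field_simp
        ring
      linarith [key, sq_nonneg (s - 1/E)]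
    · exact intervalIntegral.integral_nonneg hs0 (fun u _ => f_nonneg u)
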